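/- lim_{s→1} ( (1/(2·2^s)) · √π · Γ(s−1/2)/Γ(s) · (2^{2s}−2)/(2^{2s}−1) · ζ(2s−1)/ζ(2s) − 1/(2π(s−1)) ) = (1/π)·( ζ'(−1)/ζ(−1) − log(4π) + 1 + (1/6)·log 2 ), where Γ is the Gamma function and ζ the Riemann zeta function. -/

import Mathlib

open Complex Filter

open Real

local notation "γ" => Real.eulerMascheroniConstant
local notation "ζ" => riemannZeta

lemma two_ne_neg_nat : ∀ n : ℕ, (2 : ℂ) ≠ -n := by
  intro n h
  have := congrArg Complex.re h
  simp at this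
  linarith [Nat.cast_nonneg (α := ℝ) n]

lemma zeta_neg_one : riemannZeta (-1) = -1 / 12 := by
  have h := riemannZeta_one_sub two_ne_neg_nat (by norm_num : (2:ℂ) ≠ 1)
  have h1 : (1 - 2 : ℂ) = -1 := by norm_num
  rw [h1] at h
  rw [h, riemannZeta_two, show Complex.Gamma 2 = 1 by simpa using Complex.Gamma_nat_eq_factorial 1]
  have hc : Complex.cos (↑π * 2 / 2) = -1 := by
    rw [show (↑π * 2 / 2 : ℂ) = (π : ℂ) by ring, ← Complex.ofReal_cos, Real.cos_pi]
    norm_num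
  have hp : ((2 : ℂ) * π) ^ (-2 : ℂ) = 1 / (2 * (π:ℂ))^2 := by
    rw [show (-2 : ℂ) = -((2:ℕ):ℂ) by norm_num, Complex.cpow_neg, Complex.cpow_natCast, one_div]
  rw [hc, hp]
  have hπ : (π : ℂ) ≠ 0 := Complex.ofReal_ne_zero.mpr Real.pi_ne_zero
  field_simp
  ring

lemma zeta_deriv_neg_one :
    deriv ζ (-1) * (π:ℂ)^2 =
      -(π:ℂ)^2 * ((Real.log (2 * π) : ℂ) - 1 + (γ : ℂ)) / 12 + deriv ζ 2 / 2 := by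
  have hπ : (π : ℂ) ≠ 0 := Complex.ofReal_ne_zero.mpr Real.pi_ne_zero
  have h2π : (2 : ℂ) * π ≠ 0 := by simp [hπ]
  -- LHS derivative
  have hL : HasDerivAt (fun s : ℂ => ζ (1 - s)) (-deriv ζ (-1)) 2 := by
    have hz : HasDerivAt ζ (deriv ζ (-1)) ((fun s : ℂ => 1 - s) 2) := by
      show HasDerivAt ζ _ (1 - 2 : ℂ)
      rw [show (1 - 2 : ℂ) = -1 by norm_num]
      exact (differentiableAt_riemannZeta (by norm_num : (-1:ℂ) ≠ 1)).hasDerivAt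
    have hf : HasDerivAt (fun s : ℂ => 1 - s) (-1) 2 := (hasDerivAt_id 2).const_sub 1
    have := hz.comp 2 hf
    simpa [Function.comp_def, mul_comm] using this
  -- RHS derivative
  have hA : HasDerivAt (fun s : ℂ => 2 * ((2:ℂ) * π) ^ (-s))
      (2 * (((2:ℂ) * π) ^ (-2:ℂ) * Complex.log (2 * π) * (-1))) 2 := by
    exact (((hasDerivAt_id (2:ℂ)).neg).const_cpow (Or.inl h2π)).const_mul 2
  have hB : HasDerivAt Complex.Gamma (1 - (γ:ℂ)) 2 := by
    have := Complex.hasDerivAt_Gamma_nat 1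
    norm_num [harmonic_succ] at this
    convert this using 1 <;> push_cast <;> ring
  have hC : HasDerivAt (fun s : ℂ => Complex.cos (↑π * s / 2))
      (-Complex.sin (↑π * 2 / 2) * ((π:ℂ) / 2)) 2 := by
    have hf : HasDerivAt (fun s : ℂ => ↑π * s / 2) ((π:ℂ)/2) 2 := by
      simpa using ((hasDerivAt_id (2:ℂ)).const_mul (π:ℂ)).div_const 2
    exact hf.ccos
  have hZ : HasDerivAt ζ (deriv ζ 2) 2 :=
    (differentiableAt_riemannZeta (by norm_num : (2:ℂ) ≠ 1)).hasDerivAt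
  have hR := ((hA.mul hB).mul hC).mul hZ
  -- the two functions agree near 2
  have hev : (fun s : ℂ => ζ (1 - s)) =ᶠ[nhds (2:ℂ)]
      (fun s : ℂ => 2 * ((2:ℂ) * π) ^ (-s) * Complex.Gamma s * Complex.cos (↑π * s / 2) * ζ s) := by
    have hmem : {s : ℂ | 1 < s.re} ∈ nhds (2:ℂ) :=
      (isOpen_lt continuous_const Complex.continuous_re).mem_nhds (by norm_num)
    filter_upwards [hmem] with s hs
    refine riemannZeta_one_sub (fun n => ?_) (fun h => ?_)
    · intro h
      have := congrArg Complex.re h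
      simp at this
      linarith [Nat.cast_nonneg (α := ℝ) n, this]
    · rw [h] at hs; simp at hs
  have heq := hL.unique (hR.congr_of_eventuallyEq hev)
  have hΓ2 : Complex.Gamma 2 = 1 := by simpa using Complex.Gamma_nat_eq_factorial 1
  have hcos : Complex.cos (↑π * 2 / 2) = -1 := by
    rw [show (↑π * 2 / 2 : ℂ) = (π : ℂ) by ring, ← Complex.ofReal_cos, Real.cos_pi]
    norm_num
  have hsin : Complex.sin (↑π * 2 / 2) = 0 := by
    rw [show (↑π * 2 / 2 : ℂ) = (π : ℂ) by ring, ← Complex.ofReal_sin, Real.sin_pi]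
    norm_num
  have hp : ((2 : ℂ) * π) ^ (-2 : ℂ) = 1 / (2 * (π:ℂ))^2 := by
    rw [show (-2 : ℂ) = -((2:ℕ):ℂ) by norm_num, Complex.cpow_neg, Complex.cpow_natCast, one_div]
  have hlog : Complex.log (2 * (π:ℂ)) = (Real.log (2 * π) : ℂ) := by
    rw [show (2 * (π:ℂ)) = ((2 * π : ℝ) : ℂ) by push_cast; ring,
      Complex.ofReal_log (by positivity)]
  simp only [Pi.mul_apply] at heq
  rw [hΓ2, hcos, hsin, hp, hlog, riemannZeta_two] at heq
  have h4 : ((2:ℂ) * π)^2 ≠ 0 := pow_ne_zero 2 h2π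
  field_simp at heq
  have h1 : (π:ℂ)^4 * (deriv ζ (-1) * (π:ℂ)^2) =
      (π:ℂ)^4 * (-(π:ℂ)^2 * ((Real.log (2 * π) : ℂ) - 1 + (γ : ℂ)) / 12 + deriv ζ 2 / 2) := by
    linear_combination (-(π:ℂ)^4/24) * heq
  exact mul_left_cancel₀ (pow_ne_zero 4 hπ) h1

set_option maxHeartbeats 2000000 in
/-- **Off-diagonal scattering constant of Γ(2).**
`lim_{s→1} ( (1/(2·2^s))·√π·Γ(s−1/2)/Γ(s) · (2^{2s}−2)/(2^{2s}−1) · ζ(2s−1)/ζ(2s)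
  − 1/(2π(s−1)) ) = (1/π)·( ζ'(−1)/ζ(−1) − log(4π) + 1 + (1/6)·log 2 )`. -/
theorem gamma_two_scattering_offdiag :
    Tendsto (fun s : ℂ =>
        (1 / (2 * (2 : ℂ) ^ s)) * (Real.sqrt Real.pi : ℂ) *
          (Complex.Gamma (s - 1 / 2) / Complex.Gamma s) *
          (((2 : ℂ) ^ (2 * s) - 2) / ((2 : ℂ) ^ (2 * s) - 1)) *
          (riemannZeta (2 * s - 1) / riemannZeta (2 * s)) -
        1 / (2 * (Real.pi : ℂ) * (s - 1)))
      (nhdsWithin 1 {(1 : ℂ)}ᶜ)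
      (nhds ((1 / (Real.pi : ℂ)) *
        (deriv riemannZeta (-1) / riemannZeta (-1) - (Real.log (4 * Real.pi) : ℂ) + 1 +
          (1 / 6) * (Real.log 2 : ℂ)))) := by
  have hπ : (π : ℂ) ≠ 0 := Complex.ofReal_ne_zero.mpr Real.pi_ne_zero
  have h2 : (2 : ℂ) ≠ 0 := two_ne_zero
  have hc1 : (2 : ℂ) ^ (1 : ℂ) = 2 := Complex.cpow_one 2
  have hc2 : (2 : ℂ) ^ (2 * (1 : ℂ)) = 4 := by
    rw [mul_one, show (2:ℂ) = ((2:ℕ):ℂ) by norm_num, Complex.cpow_natCast]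
    norm_num
  -- derivative of the analytic part
  have hG1 : HasDerivAt (fun s : ℂ => 1 / (2 * (2:ℂ) ^ s))
      ((0 * (2 * (2:ℂ) ^ (1:ℂ)) - 1 * (2 * ((2:ℂ) ^ (1:ℂ) * Complex.log 2 * 1))) /
        (2 * (2:ℂ) ^ (1:ℂ)) ^ 2) 1 := by
    refine (hasDerivAt_const 1 (1:ℂ)).div
      (((hasDerivAt_id (1:ℂ)).const_cpow (Or.inl h2)).const_mul 2) ?_
    rw [hc1]; norm_num
  have hΓh : HasDerivAt (fun s : ℂ => Complex.Gamma (s - 1/2))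
      (-(Real.sqrt Real.pi : ℂ) * ((Real.eulerMascheroniConstant : ℂ) +
        2 * Complex.log 2)) 1 := by
    have h0 : HasDerivAt Complex.Gamma
        (-(Real.sqrt Real.pi : ℂ) * ((Real.eulerMascheroniConstant : ℂ) +
          2 * Complex.log 2)) ((fun s : ℂ => s - 1/2) 1) := by
      show HasDerivAt Complex.Gamma _ ((1:ℂ) - 1/2)
      rw [show (1:ℂ) - 1/2 = 1/2 by norm_num]
      exact Complex.hasDerivAt_Gamma_one_half
    have := h0.comp 1 ((hasDerivAt_id (1:ℂ)).sub_const (1/2))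
    simpa [Function.comp_def] using this
  have hΓ1 : HasDerivAt Complex.Gamma (-(Real.eulerMascheroniConstant : ℂ)) 1 := by
    exact_mod_cast Complex.hasDerivAt_Gamma_one
  have hG3 := hΓh.div hΓ1 (by rw [Complex.Gamma_one]; norm_num)
  have hpow2 : HasDerivAt (fun s : ℂ => (2:ℂ) ^ (2 * s))
      ((2:ℂ) ^ (2 * (1:ℂ)) * Complex.log 2 * (2 * 1)) 1 :=
    ((hasDerivAt_id (1:ℂ)).const_mul 2).const_cpow (Or.inl h2)
  have hG4 := (hpow2.sub_const 2).div (hpow2.sub_const 1) (by rw [hc2]; norm_num)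
  have hζ2s : HasDerivAt (fun s : ℂ => riemannZeta (2 * s)) (deriv riemannZeta 2 * 2) 1 := by
    have h0 : HasDerivAt riemannZeta (deriv riemannZeta 2) ((fun s : ℂ => 2 * s) 1) := by
      show HasDerivAt riemannZeta _ (2 * (1:ℂ))
      rw [mul_one]
      exact (differentiableAt_riemannZeta (by norm_num : (2:ℂ) ≠ 1)).hasDerivAt
    have := h0.comp 1 ((hasDerivAt_id (1:ℂ)).const_mul 2)
    simpa [Function.comp_def] using this
  have hζ2ne : riemannZeta (2 * (1:ℂ)) ≠ 0 := by
    rw [mul_one, riemannZeta_two]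
    intro h
    rw [div_eq_zero_iff] at h
    simp [pow_eq_zero_iff, hπ] at h
  have hG := (((hG1.mul_const ((Real.sqrt Real.pi : ℝ) : ℂ)).mul hG3).mul hG4).div hζ2s hζ2ne
  -- limit of zeta part
  have hmap : Tendsto (fun s : ℂ => 2 * s - 1) (nhdsWithin 1 {(1:ℂ)}ᶜ)
      (nhdsWithin 1 {(1:ℂ)}ᶜ) := by
    apply tendsto_nhdsWithin_of_tendsto_nhds_of_eventually_within
    · have : Continuous (fun s : ℂ => 2 * s - 1) := by continuity
      have h := this.tendsto 1
      rw [show (2:ℂ) * 1 - 1 = 1 by norm_num] at h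
      exact h.mono_left nhdsWithin_le_nhds
    · filter_upwards [self_mem_nhdsWithin] with s hs
      simp only [Set.mem_compl_iff, Set.mem_singleton_iff] at hs ⊢
      intro h
      apply hs
      have : (2:ℂ) * s = 2 * 1 := by rw [mul_one]; linear_combination h
      exact mul_left_cancel₀ h2 this
  have t1 := tendsto_riemannZeta_sub_one_div.comp hmap
  have tG := hG.differentiableAt.continuousAt.tendsto.mono_left
    (nhdsWithin_le_nhds (s := {(1:ℂ)}ᶜ))
  have tslope := hasDerivAt_iff_tendsto_slope.mp hG
  -- clean forms
  have ha : ((Real.sqrt Real.pi : ℝ) : ℂ) ≠ 0 :=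
    Complex.ofReal_ne_zero.mpr (Real.sqrt_ne_zero'.mpr Real.pi_pos)
  have hsq : (((Real.sqrt Real.pi : ℝ) : ℂ))^2 = (π : ℂ) := by
    rw [← Complex.ofReal_pow, Real.sq_sqrt Real.pi_pos.le]
  have hhalf : (1:ℂ) - 1/2 = 1/2 := by norm_num
  have hΓhalf : Complex.Gamma (1/2) = ((Real.sqrt Real.pi : ℝ) : ℂ) := by
    rw [Complex.Gamma_one_half_eq, show ((1:ℂ)/2) = (((1/2 : ℝ)):ℂ) by norm_num,
      ← Complex.ofReal_cpow Real.pi_pos.le, Real.sqrt_eq_rpow]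
  have hGval : (1 / (2 * (2:ℂ) ^ (1:ℂ)) * ((Real.sqrt Real.pi : ℝ) : ℂ) *
      (Complex.Gamma ((1:ℂ) - 1/2) / Complex.Gamma 1) *
      (((2:ℂ) ^ (2 * (1:ℂ)) - 2) / ((2:ℂ) ^ (2 * (1:ℂ)) - 1))) / riemannZeta (2 * 1) =
      1 / (π:ℂ) := by
    rw [hc1, hc2, hhalf, hΓhalf, Complex.Gamma_one, mul_one, riemannZeta_two]
    simp only [← hsq]
    field_simp
    ring
  have hG' : HasDerivAt (fun s : ℂ => (1 / (2 * (2:ℂ) ^ s) * ((Real.sqrt Real.pi : ℝ) : ℂ) *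
        (Complex.Gamma (s - 1/2) / Complex.Gamma s) *
        (((2:ℂ) ^ (2 * s) - 2) / ((2:ℂ) ^ (2 * s) - 1))) / riemannZeta (2 * s))
      (-5 * Complex.log 2 / (3 * (π:ℂ)) - 12 * deriv riemannZeta 2 / (π:ℂ)^3) 1 := by
    refine hG.congr_deriv ?_
    beta_reduce
    simp only [Pi.mul_apply, Pi.div_apply]
    rw [hc1, hc2, hhalf, hΓhalf, Complex.Gamma_one, show (2:ℂ) * 1 = 2 by norm_num,
      riemannZeta_two]
    simp only [← hsq]
    field_simp
    ring
  have tG := hG'.differentiableAt.continuousAt.tendsto.mono_left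
    (nhdsWithin_le_nhds (s := {(1:ℂ)}ᶜ))
  have tG' : Tendsto (fun s : ℂ => (1 / (2 * (2:ℂ) ^ s) * ((Real.sqrt Real.pi : ℝ) : ℂ) *
        (Complex.Gamma (s - 1/2) / Complex.Gamma s) *
        (((2:ℂ) ^ (2 * s) - 2) / ((2:ℂ) ^ (2 * s) - 1))) / riemannZeta (2 * s))
      (nhdsWithin 1 {(1:ℂ)}ᶜ) (nhds (1 / (π:ℂ))) := by
    convert tG using 2
    exact hGval.symm
  have tslope := hasDerivAt_iff_tendsto_slope.mp hG'
  have H := (tG'.mul t1).add (tslope.mul_const ((1:ℂ)/2))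
  -- value identity
  have hlog2 : Complex.log 2 = ((Real.log 2 : ℝ) : ℂ) := by
    rw [show (2:ℂ) = ((2:ℝ):ℂ) by norm_num, Complex.ofReal_log (by norm_num : (0:ℝ) ≤ 2)]
  have hlog4π : ((Real.log (4 * π) : ℝ) : ℂ) = 2 * ((Real.log 2 : ℝ) : ℂ) +
      ((Real.log π : ℝ) : ℂ) := by
    rw [Real.log_mul (by norm_num) Real.pi_ne_zero, show (4:ℝ) = 2^2 by norm_num, Real.log_pow]
    push_cast
    ring
  have hlog2π : ((Real.log (2 * π) : ℝ) : ℂ) = ((Real.log 2 : ℝ) : ℂ) +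
      ((Real.log π : ℝ) : ℂ) := by
    rw [Real.log_mul (by norm_num) Real.pi_ne_zero]
    push_cast
    ring
  have hz1 : deriv ζ (-1) = (-(π:ℂ)^2 * ((Real.log (2 * π) : ℂ) - 1 + (γ:ℂ)) / 12 +
      deriv ζ 2 / 2) / (π:ℂ)^2 := by
    rw [eq_div_iff (pow_ne_zero 2 hπ)]
    exact zeta_deriv_neg_one
  have hval : 1 / (π:ℂ) * (γ:ℂ) +
      (-5 * Complex.log 2 / (3 * (π:ℂ)) - 12 * deriv riemannZeta 2 / (π:ℂ)^3) * (1/2) =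
      (1 / (π:ℂ)) * (deriv riemannZeta (-1) / riemannZeta (-1) - ((Real.log (4 * π) : ℝ) : ℂ) +
        1 + (1/6) * ((Real.log 2 : ℝ) : ℂ)) := by
    rw [hz1, zeta_neg_one, hlog4π, hlog2π, hlog2]
    field_simp
    ring
  rw [← hval]
  refine H.congr' (Filter.Eventually.of_forall fun s => ?_)
  simp only [Function.comp_apply, slope_def_field]
  beta_reduce
  rw [hGval]
  simp only [show ∀ z : ℂ, 2*z - 1 - 1 = 2*(z-1) from fun z => by ring, one_div, mul_inv]
  ring
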